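/- For all parameters A, B, C ∈ ℂ with (C;q)_n ≠ 0 for all n, and all x, y ∈ ℂ with |x| < 1 and |y| < 1, the bibasic Humbert function satisfies (1−B)·Φ₁(A,q₁B;C;q,q₁;x,y) + B·Φ₁(A,B;C;q,q₁;q₁x,y) = Φ₁(A,B;C;q,q₁;x,y). (Equation (2.10), with B = q₁^b.) -/

import Mathlib

open Complex

/-- The q-shifted factorial (z;q)_n = prod_{r=0}^{n-1} (1 - z q^r). -/
noncomputable def qPoch (q z : ℂ) (n : ℕ) : ℂ :=
  ∏ r ∈ Finset.range n, (1 - z * q ^ r)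

/-- The bibasic Humbert hypergeometric function Φ₁ on two independent bases q and q₁. -/
noncomputable def Phi1 (q q1 A B C x y : ℂ) : ℂ :=
  ∑' p : ℕ × ℕ,
    qPoch q A (p.1 + p.2) * qPoch q1 B p.1 /
      (qPoch q C (p.1 + p.2) * qPoch q1 q1 p.1 * qPoch q q p.2) * x ^ p.1 * y ^ p.2

/-- The Jackson p-derivative. -/
noncomputable def jackson (p : ℂ) (f : ℂ → ℂ) (x : ℂ) : ℂ :=
  (f x - f (p * x)) / ((1 - p) * x)

/- Auxiliary lemmas -/

lemma aux_one_sub_sum_le_prod (s : Finset ℕ) (t : ℕ → ℝ) (h0 : ∀ i ∈ s, 0 ≤ t i)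
    (h1 : ∀ i ∈ s, t i ≤ 1) : 1 - ∑ i ∈ s, t i ≤ ∏ i ∈ s, (1 - t i) := by
  induction s using Finset.cons_induction with
  | empty => simp
  | cons a s ha ih =>
    rw [Finset.sum_cons, Finset.prod_cons]
    have h0a := h0 a (Finset.mem_cons_self a s)
    have h1a := h1 a (Finset.mem_cons_self a s)
    have ih' := ih (fun i hi => h0 i (Finset.mem_cons_of_mem hi))
      (fun i hi => h1 i (Finset.mem_cons_of_mem hi))
    have hS : 0 ≤ ∑ i ∈ s, t i :=
      Finset.sum_nonneg (fun i hi => h0 i (Finset.mem_cons_of_mem hi))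
    nlinarith [mul_le_mul_of_nonneg_left ih' (by linarith : (0:ℝ) ≤ 1 - t a),
      mul_nonneg h0a hS]

lemma aux_geom_sum_le {r : ℝ} (h0 : 0 ≤ r) (h1 : r < 1) (n : ℕ) :
    ∑ i ∈ Finset.range n, r ^ i ≤ (1 - r)⁻¹ := by
  have hs : Summable fun i : ℕ => r ^ i := summable_geometric_of_lt_one h0 h1
  calc ∑ i ∈ Finset.range n, r ^ i ≤ ∑' i : ℕ, r ^ i :=
        Summable.sum_le_tsum _ (fun i _ => pow_nonneg h0 i) hs
    _ = (1 - r)⁻¹ := tsum_geometric_of_lt_one h0 h1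

lemma qPoch_norm_le (q z : ℂ) (hq : ‖q‖ < 1) (n : ℕ) :
    ‖qPoch q z n‖ ≤ Real.exp (‖z‖ * (1 - ‖q‖)⁻¹) := by
  have hq0 : (0:ℝ) ≤ ‖q‖ := norm_nonneg _
  calc ‖qPoch q z n‖ = ∏ r ∈ Finset.range n, ‖1 - z * q ^ r‖ := by
        rw [qPoch]; exact norm_prod _ _
    _ ≤ ∏ r ∈ Finset.range n, Real.exp (‖z‖ * ‖q‖ ^ r) := by
        apply Finset.prod_le_prod (fun i _ => norm_nonneg _)
        intro i _
        calc ‖1 - z * q ^ i‖ ≤ ‖(1:ℂ)‖ + ‖z * q ^ i‖ := norm_sub_le _ _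
          _ = ‖z‖ * ‖q‖ ^ i + 1 := by
              rw [norm_mul, norm_pow, norm_one]; ring
          _ ≤ Real.exp (‖z‖ * ‖q‖ ^ i) := Real.add_one_le_exp _
    _ = Real.exp (∑ r ∈ Finset.range n, ‖z‖ * ‖q‖ ^ r) := (Real.exp_sum _ _).symm
    _ ≤ Real.exp (‖z‖ * (1 - ‖q‖)⁻¹) := by
        apply Real.exp_le_exp.2
        rw [← Finset.mul_sum]
        exact mul_le_mul_of_nonneg_left (aux_geom_sum_le hq0 hq n) (norm_nonneg _)

lemma qPoch_lower (q z : ℂ) (hq : ‖q‖ < 1) (hz : ∀ n, qPoch q z n ≠ 0) :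
    ∃ c : ℝ, 0 < c ∧ ∀ n, c ≤ ‖qPoch q z n‖ := by
  have hq0 : (0:ℝ) ≤ ‖q‖ := norm_nonneg _
  have hq1 : (0:ℝ) < 1 - ‖q‖ := by linarith
  have hz0 : (0:ℝ) ≤ ‖z‖ := norm_nonneg _
  obtain ⟨N, hN⟩ := exists_pow_lt_of_lt_one
    (show (0:ℝ) < (1 - ‖q‖) / (2 * (‖z‖ + 1)) by positivity) hq
  -- tail bound: for n, the sum over Ico N n of ‖z‖ * ‖q‖^r is ≤ 1/2
  have tail : ∀ n : ℕ, N ≤ n → ∑ r ∈ Finset.Ico N n, ‖z‖ * ‖q‖ ^ r ≤ 1 / 2 := by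
    intro n hn
    have e1 : ∑ r ∈ Finset.Ico N n, ‖z‖ * ‖q‖ ^ r
        = ‖z‖ * ‖q‖ ^ N * ∑ i ∈ Finset.range (n - N), ‖q‖ ^ i := by
      rw [Finset.sum_Ico_eq_sum_range, Finset.mul_sum]
      exact Finset.sum_congr rfl (fun i _ => by rw [pow_add]; ring)
    rw [e1]
    have e2 : ∑ i ∈ Finset.range (n - N), ‖q‖ ^ i ≤ (1 - ‖q‖)⁻¹ :=
      aux_geom_sum_le hq0 hq _
    have hpN : (0:ℝ) ≤ ‖q‖ ^ N := pow_nonneg hq0 N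
    have h3 : ‖z‖ * ‖q‖ ^ N * ∑ i ∈ Finset.range (n - N), ‖q‖ ^ i
        ≤ ‖z‖ * ‖q‖ ^ N * (1 - ‖q‖)⁻¹ := by
      apply mul_le_mul_of_nonneg_left e2 (by positivity)
    refine h3.trans ?_
    rw [← div_eq_mul_inv, div_le_iff₀ hq1]
    rw [lt_div_iff₀ (by positivity)] at hN
    nlinarith
  -- positive lower bound on initial segment
  have hpos : ∀ n, 0 < ‖qPoch q z n‖ := fun n => norm_pos_iff.2 (hz n)
  set m : ℝ := (Finset.range (N + 1)).inf' (by simp) (fun n => ‖qPoch q z n‖) with hm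
  have hm0 : 0 < m := by
    rw [hm, Finset.lt_inf'_iff]
    exact fun i _ => hpos i
  have hmle : ∀ n ≤ N, m ≤ ‖qPoch q z n‖ := by
    intro n hn
    exact Finset.inf'_le _ (Finset.mem_range.2 (Nat.lt_succ_of_le hn))
  refine ⟨m / 2, by positivity, ?_⟩
  intro n
  rcases le_or_gt n N with hn | hn
  · linarith [hmle n hn, hm0]
  · have hNn : N ≤ n := hn.le
    have split : qPoch q z n = qPoch q z N * ∏ r ∈ Finset.Ico N n, (1 - z * q ^ r) := by
      rw [qPoch, qPoch]
      exact (Finset.prod_range_mul_prod_Ico _ hNn).symm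
    -- each term ‖z‖‖q‖^r for r in Ico is ≤ 1/2 (hence ≤ 1)
    have hterm : ∀ r ∈ Finset.Ico N n, ‖z‖ * ‖q‖ ^ r ≤ 1 / 2 := by
      intro r hr
      have := Finset.single_le_sum (f := fun r => ‖z‖ * ‖q‖ ^ r)
        (fun i _ => by positivity) hr
      exact this.trans (tail n hNn)
    have hfac : ∀ r ∈ Finset.Ico N n, 1 - ‖z‖ * ‖q‖ ^ r ≤ ‖1 - z * q ^ r‖ := by
      intro r _
      calc 1 - ‖z‖ * ‖q‖ ^ r = ‖(1:ℂ)‖ - ‖z * q ^ r‖ := by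
            rw [norm_one, norm_mul, norm_pow]
        _ ≤ ‖1 - z * q ^ r‖ := norm_sub_norm_le _ _
    have hfac0 : ∀ r ∈ Finset.Ico N n, (0:ℝ) ≤ 1 - ‖z‖ * ‖q‖ ^ r := by
      intro r hr; linarith [hterm r hr]
    have hW : (1:ℝ) / 2 ≤ ‖∏ r ∈ Finset.Ico N n, (1 - z * q ^ r)‖ := by
      calc (1:ℝ) / 2 ≤ 1 - ∑ r ∈ Finset.Ico N n, ‖z‖ * ‖q‖ ^ r := by
            linarith [tail n hNn]
        _ ≤ ∏ r ∈ Finset.Ico N n, (1 - ‖z‖ * ‖q‖ ^ r) :=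
            aux_one_sub_sum_le_prod _ _ (fun i hi => by positivity)
              (fun i hi => by linarith [hterm i hi])
        _ ≤ ∏ r ∈ Finset.Ico N n, ‖1 - z * q ^ r‖ :=
            Finset.prod_le_prod hfac0 hfac
        _ = ‖∏ r ∈ Finset.Ico N n, (1 - z * q ^ r)‖ := (norm_prod _ _).symm
    calc m / 2 ≤ ‖qPoch q z N‖ * (1 / 2) := by
          have := hmle N le_rfl; nlinarith
      _ ≤ ‖qPoch q z N‖ * ‖∏ r ∈ Finset.Ico N n, (1 - z * q ^ r)‖ :=
          mul_le_mul_of_nonneg_left hW (norm_nonneg _)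
      _ = ‖qPoch q z n‖ := by rw [split, norm_mul]

lemma qPoch_self_ne_zero (q : ℂ) (hq : ‖q‖ < 1) (n : ℕ) : qPoch q q n ≠ 0 := by
  rw [qPoch]
  apply Finset.prod_ne_zero_iff.2
  intro r _
  intro h
  have h1 : q * q ^ r = 1 := by linear_combination -h
  have : ‖q * q ^ r‖ < 1 := by
    rw [norm_mul, norm_pow, ← pow_succ']
    exact pow_lt_one₀ (norm_nonneg _) hq (Nat.succ_ne_zero r)
  rw [h1, norm_one] at this
  exact absurd this (lt_irrefl _)

lemma phi1_summable (q q1 A B C x y : ℂ) (hq : ‖q‖ < 1) (hq1 : ‖q1‖ < 1)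
    (hC : ∀ n, qPoch q C n ≠ 0) (hx : ‖x‖ < 1) (hy : ‖y‖ < 1) :
    Summable (fun p : ℕ × ℕ => qPoch q A (p.1 + p.2) * qPoch q1 B p.1 /
      (qPoch q C (p.1 + p.2) * qPoch q1 q1 p.1 * qPoch q q p.2) * x ^ p.1 * y ^ p.2) := by
  obtain ⟨cC, hcC0, hcC⟩ := qPoch_lower q C hq hC
  obtain ⟨c1, hc10, hc1⟩ := qPoch_lower q1 q1 hq1 (qPoch_self_ne_zero q1 hq1)
  obtain ⟨c2, hc20, hc2⟩ := qPoch_lower q q hq (qPoch_self_ne_zero q hq)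
  set MA := Real.exp (‖A‖ * (1 - ‖q‖)⁻¹) with hMA
  set MB := Real.exp (‖B‖ * (1 - ‖q1‖)⁻¹) with hMB
  have hMA0 : 0 < MA := Real.exp_pos _
  have hMB0 : 0 < MB := Real.exp_pos _
  set K := MA * MB / (cC * c1 * c2) with hK
  have hgeo : Summable (fun p : ℕ × ℕ => K * (‖x‖ ^ p.1 * ‖y‖ ^ p.2)) := by
    apply Summable.mul_left
    exact Summable.mul_of_nonneg (summable_geometric_of_lt_one (norm_nonneg x) hx)
      (summable_geometric_of_lt_one (norm_nonneg y) hy)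
      (fun i => pow_nonneg (norm_nonneg x) i) (fun i => pow_nonneg (norm_nonneg y) i)
  apply Summable.of_norm_bounded hgeo
  intro p
  rw [norm_mul, norm_mul, norm_div, norm_mul, norm_mul, norm_mul, norm_pow, norm_pow]
  have hnum : ‖qPoch q A (p.1 + p.2)‖ * ‖qPoch q1 B p.1‖ ≤ MA * MB :=
    mul_le_mul (qPoch_norm_le q A hq _) (qPoch_norm_le q1 B hq1 _)
      (norm_nonneg _) hMA0.le
  have hden : cC * c1 * c2 ≤ ‖qPoch q C (p.1 + p.2)‖ * ‖qPoch q1 q1 p.1‖ * ‖qPoch q q p.2‖ := by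
    apply mul_le_mul (mul_le_mul (hcC _) (hc1 _) hc10.le (norm_nonneg _)) (hc2 _) hc20.le
    positivity
  have hdiv : ‖qPoch q A (p.1 + p.2)‖ * ‖qPoch q1 B p.1‖ /
      (‖qPoch q C (p.1 + p.2)‖ * ‖qPoch q1 q1 p.1‖ * ‖qPoch q q p.2‖) ≤ K := by
    rw [hK]
    exact div_le_div₀ (by positivity) hnum (by positivity) hden
  calc ‖qPoch q A (p.1 + p.2)‖ * ‖qPoch q1 B p.1‖ /
        (‖qPoch q C (p.1 + p.2)‖ * ‖qPoch q1 q1 p.1‖ * ‖qPoch q q p.2‖) *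
        ‖x‖ ^ p.1 * ‖y‖ ^ p.2
      ≤ K * ‖x‖ ^ p.1 * ‖y‖ ^ p.2 := by
        apply mul_le_mul_of_nonneg_right _ (pow_nonneg (norm_nonneg _) _)
        exact mul_le_mul_of_nonneg_right hdiv (pow_nonneg (norm_nonneg _) _)
    _ = K * (‖x‖ ^ p.1 * ‖y‖ ^ p.2) := by ring

lemma qPoch_key (q1 B : ℂ) (l : ℕ) :
    (1 - B) * qPoch q1 (q1 * B) l = qPoch q1 B l * (1 - B * q1 ^ l) := by
  induction l with
  | zero => simp [qPoch]
  | succ n ih =>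
    rw [qPoch, qPoch, Finset.prod_range_succ, Finset.prod_range_succ, ← qPoch, ← qPoch]
    linear_combination (1 - q1 * B * q1 ^ n) * ih

theorem stmt9 (q q1 A B C x y : ℂ)
    (hq0 : 0 < ‖q‖) (hq1 : ‖q‖ < 1)
    (hq10 : 0 < ‖q1‖) (hq11 : ‖q1‖ < 1)
    (hC : ∀ n : ℕ, qPoch q C n ≠ 0)
    (hx : ‖x‖ < 1) (hy : ‖y‖ < 1) :
    (1 - B) * Phi1 q q1 A (q1 * B) C x y
        + B * Phi1 q q1 A B C (q1 * x) y =
      Phi1 q q1 A B C x y := by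
  have hq : ‖q‖ < 1 := by exact hq1
  have hq1' : ‖q1‖ < 1 := by exact hq11
  have hx' : ‖x‖ < 1 := by exact hx
  have hy' : ‖y‖ < 1 := by exact hy
  have hq1x : ‖q1 * x‖ < 1 := by
    rw [norm_mul]
    nlinarith [norm_nonneg q1, norm_nonneg x]
  have h1 := phi1_summable q q1 A (q1 * B) C x y hq hq1' hC hx' hy'
  have h2 := phi1_summable q q1 A B C (q1 * x) y hq hq1' hC hq1x hy'
  unfold Phi1
  rw [← tsum_mul_left, ← tsum_mul_left, ← Summable.tsum_add (h1.mul_left (1 - B)) (h2.mul_left B)]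
  apply tsum_congr
  intro p
  have hk := qPoch_key q1 B p.1
  linear_combination (qPoch q A (p.1 + p.2) * x ^ p.1 * y ^ p.2 /
    (qPoch q C (p.1 + p.2) * qPoch q1 q1 p.1 * qPoch q q p.2)) * hk
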